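/- Let c : X1 × X2 → [0,+∞] be continuous with c ≤ a1 ⊕ a2, and let F ⊆ P_{a1⊕a2}(X1×X2). Then F is totally C-cyclically monotone if and only if its lift F̂ := { (Z1,Z2) ∈ 𝒳_{1,a1} × 𝒳_{2,a2} : (Z1,Z2)_♯𝕄 ∈ F } is Ĉ-cyclically monotone. -/

import Mathlib

open MeasureTheory Topology ENNReal Set

noncomputable section

namespace OTRM

noncomputable instance instMSPM {X : Type*} [MeasurableSpace X] [TopologicalSpace X]
    [OpensMeasurableSpace X] : MeasurableSpace (ProbabilityMeasure X) := borel _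

instance instBSPM {X : Type*} [MeasurableSpace X] [TopologicalSpace X]
    [OpensMeasurableSpace X] : BorelSpace (ProbabilityMeasure X) := ⟨rfl⟩

variable {X1 X2 : Type*}
  [MeasurableSpace X1] [TopologicalSpace X1] [BorelSpace X1] [PolishSpace X1]
  [MeasurableSpace X2] [TopologicalSpace X2] [BorelSpace X2] [PolishSpace X2]

def Coupling {Y1 Y2 : Type*} [MeasurableSpace Y1] [MeasurableSpace Y2]
    (μ1 : ProbabilityMeasure Y1) (μ2 : ProbabilityMeasure Y2) :
    Set (ProbabilityMeasure (Y1 × Y2)) :=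
  {π | (π : Measure (Y1 × Y2)).map Prod.fst = (μ1 : Measure Y1) ∧
       (π : Measure (Y1 × Y2)).map Prod.snd = (μ2 : Measure Y2)}

def transportCost (c : X1 × X2 → ℝ≥0∞) (π : ProbabilityMeasure (X1 × X2)) : ℝ≥0∞ :=
  ∫⁻ p, c p ∂(π : Measure (X1 × X2))

def OTCost (c : X1 × X2 → ℝ≥0∞) (μ1 : ProbabilityMeasure X1) (μ2 : ProbabilityMeasure X2) :
    ℝ≥0∞ :=
  ⨅ π ∈ Coupling μ1 μ2, transportCost c π

/-- First marginal of a transport plan. -/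
def margFst (π : ProbabilityMeasure (X1 × X2)) : ProbabilityMeasure X1 :=
  π.map measurable_fst.aemeasurable

/-- Second marginal of a transport plan. -/
def margSnd (π : ProbabilityMeasure (X1 × X2)) : ProbabilityMeasure X2 :=
  π.map measurable_snd.aemeasurable

/-- The iterated optimal transport cost `𝒞(M1, M2)` between laws of random measures. -/
def IterOTCost (c : X1 × X2 → ℝ≥0∞)
    (M1 : ProbabilityMeasure (ProbabilityMeasure X1))
    (M2 : ProbabilityMeasure (ProbabilityMeasure X2)) : ℝ≥0∞ :=
  ⨅ P ∈ Coupling M1 M2,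
    ∫⁻ p, OTCost c p.1 p.2 ∂(P : Measure (ProbabilityMeasure X1 × ProbabilityMeasure X2))

/-- The set of (laws of) random couplings between `M1` and `M2`. -/
def RandCoupling (M1 : ProbabilityMeasure (ProbabilityMeasure X1))
    (M2 : ProbabilityMeasure (ProbabilityMeasure X2)) :
    Set (ProbabilityMeasure (ProbabilityMeasure (X1 × X2))) :=
  {P | (P : Measure (ProbabilityMeasure (X1 × X2))).map margFst
          = (M1 : Measure (ProbabilityMeasure X1)) ∧
       (P : Measure (ProbabilityMeasure (X1 × X2))).map margSnd
          = (M2 : Measure (ProbabilityMeasure X2))}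


/-- The pair-marginal pushforward `(pr¹_♯, pr²_♯)_♯ P` of a random coupling. -/
def margPairLaw (P : ProbabilityMeasure (ProbabilityMeasure (X1 × X2))) :
    Measure (ProbabilityMeasure X1 × ProbabilityMeasure X2) :=
  (P : Measure (ProbabilityMeasure (X1 × X2))).map fun π => (margFst π, margSnd π)

/-- The set of `c`-optimal couplings (between their own marginals). -/
def OptPlans (c : X1 × X2 → ℝ≥0∞) : Set (ProbabilityMeasure (X1 × X2)) :=
  {π | transportCost c π = OTCost c (margFst π) (margSnd π)}

/-- Probability measures with finite `a`-moment: `P_a(X)`. -/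
def Pa {X : Type*} [MeasurableSpace X] (a : X → ℝ≥0∞) : Set (ProbabilityMeasure X) :=
  {μ | (∫⁻ x, a x ∂(μ : Measure X)) ≠ ⊤}

/-- Plans both of whose marginals have finite moments: `P_{a1 ⊕ a2}(X1 × X2)`. -/
def PaPair (a1 : X1 → ℝ≥0∞) (a2 : X2 → ℝ≥0∞) : Set (ProbabilityMeasure (X1 × X2)) :=
  {π | margFst π ∈ Pa a1 ∧ margSnd π ∈ Pa a2}

section Kframework

variable {Y1 Y2 : Type*}

/-- `K`-concavity of `φ` relative to the domains `D1`, `D2` (Definition 2.2(2)):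
`φ` is not identically `-∞` on `D1` and is, on `D1`, an infimum of functions
`y1 ↦ K(y1,y2) - α` with `y2 ∈ D2`, `α ∈ ℝ`. -/
def KConcaveOn (K : Y1 → Y2 → ℝ≥0∞) (D1 : Set Y1) (D2 : Set Y2) (φ : Y1 → EReal) : Prop :=
  (∃ y1 ∈ D1, φ y1 ≠ ⊥) ∧
    ∃ A : Set (Y2 × ℝ), (∀ p ∈ A, p.1 ∈ D2) ∧
      ∀ y1 ∈ D1, φ y1 = ⨅ p ∈ A, ((K y1 p.1 : EReal) - (p.2 : EReal))

/-- The `K`-transform of `φ` (Definition 2.2(3)). -/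
def KTransform (K : Y1 → Y2 → ℝ≥0∞) (D1 : Set Y1) (φ : Y1 → EReal) : Y2 → EReal :=
  fun y2 => ⨅ y1 ∈ D1, ((K y1 y2 : EReal) - φ y1)

/-- The `K`-superdifferential of `φ` (Definition 2.2(4)). -/
def KSuperdiff (K : Y1 → Y2 → ℝ≥0∞) (D1 : Set Y1) (D2 : Set Y2) (φ : Y1 → EReal) :
    Set (Y1 × Y2) :=
  {p | p.1 ∈ D1 ∧ p.2 ∈ D2 ∧ φ p.1 ≠ ⊥ ∧
    ∀ y1' ∈ D1, ((K p.1 p.2 : EReal) - φ p.1) ≤ ((K y1' p.2 : EReal) - φ y1')}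

/-- `K`-cyclical monotonicity of a set of pairs (Definition 2.2(1)). -/
def KCyclMono (K : Y1 → Y2 → ℝ≥0∞) (G : Set (Y1 × Y2)) : Prop :=
  ∀ (k : ℕ), 1 ≤ k → ∀ f : Fin k → Y1 × Y2, (∀ i, f i ∈ G) →
    ∀ σ : Equiv.Perm (Fin k), (∑ i, K (f i).1 (f i).2) ≤ ∑ i, K (f i).1 (f (σ i)).2

end Kframework

/-- First marginal of a measure on `X1 × X2 × X1`. -/
def margFirst3 (θ : ProbabilityMeasure (X1 × X2 × X1)) : ProbabilityMeasure X1 :=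
  θ.map measurable_fst.aemeasurable

/-- Third marginal of a measure on `X1 × X2 × X1`. -/
def margThird3 (θ : ProbabilityMeasure (X1 × X2 × X1)) : ProbabilityMeasure X1 :=
  θ.map (measurable_snd.comp measurable_snd).aemeasurable

/-- The total `C`-superdifferential of `φ` (Definition 3.4). -/
def TotalSuperdiff (c : X1 × X2 → ℝ≥0∞) (a1 : X1 → ℝ≥0∞) (a2 : X2 → ℝ≥0∞)
    (φ : ProbabilityMeasure X1 → EReal) : Set (ProbabilityMeasure (X1 × X2)) :=
  {π | π ∈ PaPair a1 a2 ∧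
    ∀ θ : ProbabilityMeasure (X1 × X2 × X1),
      (θ : Measure (X1 × X2 × X1)).map (fun p => (p.1, p.2.1)) = (π : Measure (X1 × X2)) →
      margThird3 θ ∈ Pa a1 →
      ((∫⁻ p, c (p.1, p.2.1) ∂(θ : Measure (X1 × X2 × X1)) : ℝ≥0∞) : EReal)
          - ((∫⁻ p, c (p.2.2, p.2.1) ∂(θ : Measure (X1 × X2 × X1)) : ℝ≥0∞) : EReal)
        ≤ φ (margFirst3 θ) - φ (margThird3 θ)}

/-- Total `C`-cyclical monotonicity of a set of plans (Definition 3.5). -/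
def TotallyCCyclMono (c : X1 × X2 → ℝ≥0∞) (F : Set (ProbabilityMeasure (X1 × X2))) : Prop :=
  ∀ (N : ℕ), 1 ≤ N → ∀ θ : ProbabilityMeasure (Fin N → X1 × X2),
    (∀ n : Fin N, θ.map (measurable_pi_apply n).aemeasurable ∈ F) →
    ∀ σ : Equiv.Perm (Fin N),
      (∫⁻ ω, ∑ i, c (ω i) ∂(θ : Measure (Fin N → X1 × X2)))
        ≤ ∫⁻ ω, ∑ i, c ((ω i).1, (ω (σ i)).2) ∂(θ : Measure (Fin N → X1 × X2))


section Lift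

variable {Q : Type*} [MeasurableSpace Q]

/-- The law (push-forward) `ι(Z) = Z_♯𝕄` of a random variable, as a probability measure
(junk value if `Z` is not a.e. measurable). -/
def law (𝕄 : Measure Q) [IsProbabilityMeasure 𝕄] {X : Type*} [MeasurableSpace X] [Nonempty X]
    (Z : Q → X) : ProbabilityMeasure X :=
  @dite _ (AEMeasurable Z 𝕄) (Classical.propDecidable _)
    (fun h => ⟨𝕄.map Z, Measure.isProbabilityMeasure_map h⟩)
    (fun _ => ⟨Measure.dirac (Classical.arbitrary X), by infer_instance⟩)

/-- The lifted space `𝒳_{a}`: measurable random variables with finite `a`-moment. -/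
def XA (𝕄 : Measure Q) {X : Type*} [MeasurableSpace X] (a : X → ℝ≥0∞) : Set (Q → X) :=
  {Z | Measurable Z ∧ (∫⁻ q, a (Z q) ∂𝕄) ≠ ⊤}

/-- The lifted cost `Ĉ(Z1,Z2) = ∫_Q c(Z1(q),Z2(q)) d𝕄(q)`. -/
def liftCost (𝕄 : Measure Q) (c : X1 × X2 → ℝ≥0∞) (Z1 : Q → X1) (Z2 : Q → X2) : ℝ≥0∞ :=
  ∫⁻ q, c (Z1 q, Z2 q) ∂𝕄

end Lift

variable [Nonempty X1] [Nonempty X2]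

section AuxIso
open Filter ProbabilityTheory

namespace OTRMAux

lemma continuous_cdf (μ : Measure ℝ) [IsProbabilityMeasure μ] [NullSingletonClass μ] :
    Continuous (cdf μ) := by
  rw [continuous_iff_continuousAt]
  intro x
  rw [(monotone_cdf μ).continuousAt_iff_leftLim_eq_rightLim]
  have hr : Function.rightLim (cdf μ) x = cdf μ x :=
    rightLim_eq_of_tendsto
      (((cdf μ).right_continuous x).mono_left (nhdsWithin_mono _ Ioi_subset_Ici_self))
  have hl : Function.leftLim (cdf μ) x = cdf μ x := by
    have h1 := (cdf μ).measure_singleton x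
    rw [measure_cdf, measure_singleton] at h1
    have h2 : cdf μ x - Function.leftLim (cdf μ) x ≤ 0 := by
      simpa [ENNReal.ofReal_eq_zero] using h1.symm
    have h3 := (monotone_cdf μ).leftLim_le (le_refl x)
    linarith
  rw [hl, hr]

lemma cdf_ivt (μ : Measure ℝ) [IsProbabilityMeasure μ] [NullSingletonClass μ] {t : ℝ}
    (ht0 : 0 < t) (ht1 : t < 1) : ∃ y, cdf μ y = t := by
  obtain ⟨a, ha⟩ := ((tendsto_cdf_atBot μ).eventually_lt_const ht0).exists
  obtain ⟨b, hb⟩ := ((tendsto_cdf_atTop μ).eventually_const_lt ht1).exists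
  have hab : a ≤ b := by
    by_contra h
    push_neg at h
    exact absurd (monotone_cdf μ h.le) (not_le.mpr (ha.trans hb))
  obtain ⟨y, _, hy⟩ := intermediate_value_Icc hab (continuous_cdf μ).continuousOn
    ⟨ha.le, hb.le⟩
  exact ⟨y, hy⟩

lemma measure_cdf_le (μ : Measure ℝ) [IsProbabilityMeasure μ] [NullSingletonClass μ] {t : ℝ}
    (ht0 : 0 ≤ t) (ht1 : t ≤ 1) : μ {x | cdf μ x ≤ t} = ENNReal.ofReal t := by
  apply le_antisymm
  · rcases eq_or_lt_of_le ht1 with h1 | h1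
    · rw [h1]
      simpa using prob_le_one
    · obtain ⟨b, hb⟩ := ((tendsto_cdf_atTop μ).eventually_const_lt h1).exists
      rcases ({x | cdf μ x ≤ t}).eq_empty_or_nonempty with hU | hU
      · simp [hU]
      · have hUb : BddAbove {x | cdf μ x ≤ t} :=
          ⟨b, fun y hy => le_of_not_gt fun h =>
            (not_le.mpr (lt_of_le_of_lt hy hb)) (monotone_cdf μ h.le)⟩
        have hUc : IsClosed {x | cdf μ x ≤ t} :=
          isClosed_le (continuous_cdf μ) continuous_const
        have hs := hUc.csSup_mem hU hUb
        calc μ {x | cdf μ x ≤ t} ≤ μ (Iic (sSup {x | cdf μ x ≤ t})) :=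
              measure_mono fun y hy => le_csSup hUb hy
          _ = ENNReal.ofReal (cdf μ (sSup {x | cdf μ x ≤ t})) := (ofReal_cdf μ _).symm
          _ ≤ ENNReal.ofReal t := ENNReal.ofReal_le_ofReal hs
  · rcases eq_or_lt_of_le ht0 with h0 | h0
    · simp [← h0]
    · rcases eq_or_lt_of_le ht1 with h1 | h1
      · have : {x | cdf μ x ≤ t} = univ := eq_univ_of_forall fun x => h1 ▸ cdf_le_one μ x
        rw [this, measure_univ]
        exact ENNReal.ofReal_le_one.mpr ht1
      · obtain ⟨y, hy⟩ := cdf_ivt μ h0 h1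
        calc ENNReal.ofReal t = μ (Iic y) := by rw [← hy, ofReal_cdf]
          _ ≤ μ {x | cdf μ x ≤ t} := measure_mono fun z hz => by
              simpa using (monotone_cdf μ hz).trans_eq hy

lemma measure_cdf_middle (μ : Measure ℝ) [IsProbabilityMeasure μ] [NullSingletonClass μ] :
    μ {x | 0 < cdf μ x ∧ cdf μ x < 1}ᶜ = 0 := by
  have h0 : μ {x | cdf μ x ≤ 0} = 0 := by
    simpa using measure_cdf_le μ (le_refl 0) zero_le_one
  have h1 : μ {x | 1 ≤ cdf μ x} = 0 := by
    rcases ({x | 1 ≤ cdf μ x}).eq_empty_or_nonempty with hU | hU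
    · simp [hU]
    · have hbd : BddBelow {x | 1 ≤ cdf μ x} := by
        obtain ⟨a, ha⟩ := ((tendsto_cdf_atBot μ).eventually_lt_const one_pos).exists
        exact ⟨a, fun y hy => le_of_not_gt fun h =>
          (not_lt.mpr hy) ((monotone_cdf μ h.le).trans_lt ha)⟩
      have hUc : IsClosed {x | 1 ≤ cdf μ x} := isClosed_le continuous_const (continuous_cdf μ)
      have hmem := hUc.csInf_mem hU hbd
      set m := sInf {x | 1 ≤ cdf μ x} with hm
      have hIic : μ (Iic m) = 1 := by
        rw [← ofReal_cdf μ m]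
        have : cdf μ m = 1 := le_antisymm (cdf_le_one μ m) hmem
        simp [this]
      have hIio : μ (Iio m) = 1 := by
        rw [measure_congr Iio_ae_eq_Iic, hIic]
      have hsub : {x | 1 ≤ cdf μ x} ⊆ (Iio m)ᶜ := fun y hy => by
        simp only [mem_compl_iff, mem_Iio, not_lt]
        exact csInf_le hbd hy
      refine le_antisymm ?_ zero_le
      calc μ {x | 1 ≤ cdf μ x} ≤ μ (Iio m)ᶜ := measure_mono hsub
        _ = 1 - μ (Iio m) := by
            rw [measure_compl measurableSet_Iio (measure_ne_top μ _), measure_univ]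
        _ = 0 := by rw [hIio]; simp
  refine le_antisymm ?_ zero_le
  calc μ {x | 0 < cdf μ x ∧ cdf μ x < 1}ᶜ
      ≤ μ ({x | cdf μ x ≤ 0} ∪ {x | 1 ≤ cdf μ x}) := by
        apply measure_mono
        intro x hx
        simp only [mem_compl_iff, mem_setOf_eq, not_and, not_lt] at hx
        by_cases h : 0 < cdf μ x
        · exact Or.inr (hx h)
        · exact Or.inl (not_lt.mp h)
    _ ≤ μ {x | cdf μ x ≤ 0} + μ {x | 1 ≤ cdf μ x} := measure_union_le _ _
    _ = 0 := by rw [h0, h1]; simp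

lemma exists_map_real (μ ν : Measure ℝ) [IsProbabilityMeasure μ] [IsProbabilityMeasure ν]
    [NullSingletonClass μ] : ∃ g : ℝ → ℝ, Measurable g ∧ μ.map g = ν := by
  set G : ℝ → ℝ := fun u => sInf {y | u ≤ cdf ν y} with hGdef
  have hG : ∀ u, 0 < u → u < 1 → ∀ x, (G u ≤ x ↔ u ≤ cdf ν x) := by
    intro u h0 h1 x
    have hSne : {y | u ≤ cdf ν y}.Nonempty := by
      obtain ⟨b, hb⟩ := ((tendsto_cdf_atTop ν).eventually_const_lt h1).exists
      exact ⟨b, hb.le⟩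
    have hbd : BddBelow {y | u ≤ cdf ν y} := by
      obtain ⟨a, ha⟩ := ((tendsto_cdf_atBot ν).eventually_lt_const h0).exists
      exact ⟨a, fun y hy => le_of_not_gt fun h =>
        (not_lt.mpr hy) ((monotone_cdf ν h.le).trans_lt ha)⟩
    have hmem : u ≤ cdf ν (G u) := by
      have hforall : ∀ y ∈ Ioi (G u), u ≤ cdf ν y := fun y hy => by
        obtain ⟨z, hz, hzy⟩ := exists_lt_of_csInf_lt hSne hy
        exact hz.trans (monotone_cdf ν hzy.le)
      have htend : Tendsto (cdf ν) (𝓝[>] (G u)) (𝓝 (cdf ν (G u))) :=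
        ((cdf ν).right_continuous _).mono_left (nhdsWithin_mono _ Ioi_subset_Ici_self)
      exact ge_of_tendsto htend (eventually_nhdsWithin_of_forall hforall)
    constructor
    · intro h
      exact hmem.trans (monotone_cdf ν h)
    · intro h
      exact csInf_le hbd h
  set A : Set ℝ := {x | 0 < cdf μ x ∧ cdf μ x < 1} with hAdef
  have hAmeas : MeasurableSet A :=
    (measurableSet_lt measurable_const (continuous_cdf μ).measurable).inter
      (measurableSet_lt (continuous_cdf μ).measurable measurable_const)
  have hAnull : μ Aᶜ = 0 := measure_cdf_middle μ
  have hAae : ∀ᵐ x ∂μ, x ∈ A := by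
    rw [ae_iff]
    simpa [compl_def] using hAnull
  set g : ℝ → ℝ := fun x => G (cdf μ x) with hgdef
  have hmono : MonotoneOn g A := by
    intro x hx y hy hxy
    have hyy : cdf μ y ≤ cdf ν (g y) := (hG _ hy.1 hy.2 (g y)).mp le_rfl
    exact (hG _ hx.1 hx.2 (g y)).mpr (((monotone_cdf μ) hxy).trans hyy)
  have haem : AEMeasurable g μ := by
    have h := aemeasurable_restrict_of_monotoneOn (μ := μ) hAmeas hmono
    rwa [Measure.restrict_eq_self_of_ae_mem hAae] at h
  have hmap : μ.map g = ν := by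
    have hprob : IsProbabilityMeasure (μ.map g) := Measure.isProbabilityMeasure_map haem
    refine Measure.ext_of_Iic (μ.map g) ν fun c => ?_
    rw [Measure.map_apply_of_aemeasurable haem measurableSet_Iic]
    have h1 : g ⁻¹' Iic c ∩ A = {x | cdf μ x ≤ cdf ν c} ∩ A := by
      ext x
      simp only [mem_inter_iff, mem_preimage, mem_Iic, mem_setOf_eq, hAdef]
      constructor
      · rintro ⟨h, hA⟩
        exact ⟨(hG _ hA.1 hA.2 c).mp h, hA⟩
      · rintro ⟨h, hA⟩
        exact ⟨(hG _ hA.1 hA.2 c).mpr h, hA⟩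
    calc μ (g ⁻¹' Iic c) = μ (g ⁻¹' Iic c ∩ A) := (measure_inter_conull hAnull).symm
      _ = μ ({x | cdf μ x ≤ cdf ν c} ∩ A) := by rw [h1]
      _ = μ {x | cdf μ x ≤ cdf ν c} := measure_inter_conull hAnull
      _ = ENNReal.ofReal (cdf ν c) := measure_cdf_le μ (cdf_nonneg ν c) (cdf_le_one ν c)
      _ = ν (Iic c) := ofReal_cdf ν c
  exact ⟨haem.mk g, haem.measurable_mk, by
    rw [← Measure.map_congr haem.ae_eq_mk]; exact hmap⟩

lemma exists_map_of_std {Q S : Type*} [MeasurableSpace Q] [StandardBorelSpace Q]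
    (𝕄 : Measure Q) [IsProbabilityMeasure 𝕄] [NullSingletonClass 𝕄]
    [MeasurableSpace S] [StandardBorelSpace S] [Nonempty S]
    (θ : Measure S) [IsProbabilityMeasure θ] :
    ∃ T : Q → S, Measurable T ∧ 𝕄.map T = θ := by
  obtain ⟨eQ, heQ⟩ := MeasureTheory.exists_measurableEmbedding_real Q
  obtain ⟨eS, heS⟩ := MeasureTheory.exists_measurableEmbedding_real S
  obtain ⟨r, hr, hre⟩ := heS.exists_measurable_extend measurable_id (fun _ => inferInstance)
  have hμ : IsProbabilityMeasure (𝕄.map eQ) :=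
    Measure.isProbabilityMeasure_map heQ.measurable.aemeasurable
  have hna : NullSingletonClass (𝕄.map eQ) := by
    refine ⟨fun x => ?_⟩
    rw [Measure.map_apply heQ.measurable (measurableSet_singleton x)]
    exact Subsingleton.measure_zero
      (fun a ha b hb => heQ.injective ((mem_preimage.mp ha).trans (mem_preimage.mp hb).symm)) 𝕄
  have hν : IsProbabilityMeasure (θ.map eS) :=
    Measure.isProbabilityMeasure_map heS.measurable.aemeasurable
  obtain ⟨g, hg, hgmap⟩ := exists_map_real (𝕄.map eQ) (θ.map eS)
  refine ⟨r ∘ g ∘ eQ, hr.comp (hg.comp heQ.measurable), ?_⟩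
  calc 𝕄.map (r ∘ g ∘ eQ) = ((𝕄.map eQ).map g).map r := by
        rw [Measure.map_map hg heQ.measurable, Measure.map_map hr (hg.comp heQ.measurable)]
    _ = (θ.map eS).map r := by rw [hgmap]
    _ = θ := by rw [Measure.map_map hr heS.measurable, hre, Measure.map_id]

end OTRMAux

end AuxIso

/-- Proposition 4.9, claim 4: for continuous `c ≤ a1 ⊕ a2` and
`F ⊆ P_{a1⊕a2}(X1×X2)`, `F` is totally `C`-cyclically monotone if and only if its lift
`F̂ = {(Z1,Z2) : (Z1,Z2)_♯𝕄 ∈ F}` is `Ĉ`-cyclically monotone. -/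
theorem totallyCCyclMono_iff_lift_cyclMono
    {Q : Type*} [MeasurableSpace Q] [StandardBorelSpace Q]
    (𝕄 : Measure Q) [IsProbabilityMeasure 𝕄] [NullSingletonClass 𝕄]
    (c : X1 × X2 → ℝ≥0∞) (hc : Continuous c)
    (a1 : X1 → ℝ≥0∞) (a2 : X2 → ℝ≥0∞) (ha1 : Measurable a1) (ha2 : Measurable a2)
    (hdom : ∀ x1 x2, c (x1, x2) ≤ a1 x1 + a2 x2)
    (F : Set (ProbabilityMeasure (X1 × X2))) (hF : F ⊆ PaPair a1 a2) :
    TotallyCCyclMono c F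
      ↔ KCyclMono (liftCost 𝕄 c)
          {p : (Q → X1) × (Q → X2) | Measurable p.1 ∧ Measurable p.2 ∧
            law 𝕄 (fun q => (p.1 q, p.2 q)) ∈ F} := by
  constructor
  · intro hTot k hk Z hZ σ
    have hWm : ∀ i, Measurable (fun q => ((Z i).1 q, (Z i).2 q)) :=
      fun i => ((hZ i).1).prodMk ((hZ i).2.1)
    set W : Q → (Fin k → X1 × X2) := fun q i => ((Z i).1 q, (Z i).2 q) with hWdef
    have hW : Measurable W := measurable_pi_lambda _ hWm
    set θ : ProbabilityMeasure (Fin k → X1 × X2) :=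
      ⟨𝕄.map W, Measure.isProbabilityMeasure_map hW.aemeasurable⟩ with hθdef
    have hθcoe : (θ : Measure (Fin k → X1 × X2)) = 𝕄.map W := rfl
    have hlawcoe : ∀ (Y : Q → X1 × X2), Measurable Y →
        (law 𝕄 Y : Measure (X1 × X2)) = 𝕄.map Y := by
      intro Y hY
      unfold law
      exact congrArg (fun P : ProbabilityMeasure (X1 × X2) => (P : Measure (X1 × X2)))
        (dif_pos hY.aemeasurable)
    have hmarg : ∀ n : Fin k, θ.map (measurable_pi_apply n).aemeasurable ∈ F := by
      intro n
      have heq : (θ.map (measurable_pi_apply n).aemeasurable)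
          = law 𝕄 (fun q => ((Z n).1 q, (Z n).2 q)) := by
        apply ProbabilityMeasure.toMeasure_injective
        rw [ProbabilityMeasure.toMeasure_map, hθcoe,
          Measure.map_map (measurable_pi_apply n) hW, hlawcoe _ (hWm n)]
        rfl
      rw [heq]
      exact (hZ n).2.2
    have key := hTot k hk θ hmarg σ
    rw [hθcoe] at key
    have hgL : Measurable (fun ω : Fin k → X1 × X2 => ∑ i, c (ω i)) := by
      apply Finset.measurable_sum
      intro i _
      exact hc.measurable.comp (measurable_pi_apply i)
    have hgR : Measurable (fun ω : Fin k → X1 × X2 => ∑ i, c ((ω i).1, (ω (σ i)).2)) := by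
      apply Finset.measurable_sum
      intro i _
      exact hc.measurable.comp ((measurable_fst.comp (measurable_pi_apply i)).prodMk
        (measurable_snd.comp (measurable_pi_apply (σ i))))
    have hL : ∫⁻ ω, ∑ i, c (ω i) ∂(𝕄.map W)
        = ∑ i, liftCost 𝕄 c (Z i).1 (Z i).2 := by
      rw [lintegral_map hgL hW]
      exact lintegral_finset_sum (f := fun i q => c ((Z i).1 q, (Z i).2 q))
        Finset.univ (fun i _ => hc.measurable.comp (hWm i))
    have hR : ∫⁻ ω, ∑ i, c ((ω i).1, (ω (σ i)).2) ∂(𝕄.map W)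
        = ∑ i, liftCost 𝕄 c (Z i).1 (Z (σ i)).2 := by
      rw [lintegral_map hgR hW]
      exact lintegral_finset_sum (f := fun i q => c ((Z i).1 q, (Z (σ i)).2 q))
        Finset.univ (fun i _ => hc.measurable.comp
          (((hZ i).1).prodMk ((hZ (σ i)).2.1)))
    rw [hL, hR] at key
    exact key
  · intro hK N hN θ hmarg σ
    obtain ⟨T, hT, hTmap⟩ :=
      OTRMAux.exists_map_of_std 𝕄 (θ : Measure (Fin N → X1 × X2))
    set Z : Fin N → (Q → X1) × (Q → X2) :=
      fun i => ((fun q => (T q i).1), (fun q => (T q i).2)) with hZdef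
    have hTi : ∀ i : Fin N, Measurable (fun q => T q i) :=
      fun i => (measurable_pi_apply i).comp hT
    have hlawcoe : ∀ (Y : Q → X1 × X2), Measurable Y →
        (law 𝕄 Y : Measure (X1 × X2)) = 𝕄.map Y := by
      intro Y hY
      unfold law
      exact congrArg (fun P : ProbabilityMeasure (X1 × X2) => (P : Measure (X1 × X2)))
        (dif_pos hY.aemeasurable)
    have hmem : ∀ i, Z i ∈ {p : (Q → X1) × (Q → X2) | Measurable p.1 ∧ Measurable p.2 ∧
        law 𝕄 (fun q => (p.1 q, p.2 q)) ∈ F} := by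
      intro i
      refine ⟨measurable_fst.comp (hTi i), measurable_snd.comp (hTi i), ?_⟩
      have hYm : Measurable (fun q => ((Z i).1 q, (Z i).2 q)) :=
        (measurable_fst.comp (hTi i)).prodMk (measurable_snd.comp (hTi i))
      have heq : law 𝕄 (fun q => ((Z i).1 q, (Z i).2 q))
          = θ.map (measurable_pi_apply i).aemeasurable := by
        apply ProbabilityMeasure.toMeasure_injective
        rw [ProbabilityMeasure.toMeasure_map, hlawcoe _ hYm]
        have h2 : (fun q => ((Z i).1 q, (Z i).2 q))
            = (fun ω : Fin N → X1 × X2 => ω i) ∘ T := by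
          funext q
          simp [hZdef]
        rw [h2, ← Measure.map_map (measurable_pi_apply i) hT, hTmap]
      show law 𝕄 (fun q => ((Z i).1 q, (Z i).2 q)) ∈ F
      rw [heq]
      exact hmarg i
    have key := hK N hN Z hmem σ
    have hgL : Measurable (fun ω : Fin N → X1 × X2 => ∑ i, c (ω i)) := by
      apply Finset.measurable_sum
      intro i _
      exact hc.measurable.comp (measurable_pi_apply i)
    have hgR : Measurable (fun ω : Fin N → X1 × X2 => ∑ i, c ((ω i).1, (ω (σ i)).2)) := by
      apply Finset.measurable_sum
      intro i _
      exact hc.measurable.comp ((measurable_fst.comp (measurable_pi_apply i)).prodMk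
        (measurable_snd.comp (measurable_pi_apply (σ i))))
    have hL : ∫⁻ ω, ∑ i, c (ω i) ∂(θ : Measure (Fin N → X1 × X2))
        = ∑ i, liftCost 𝕄 c (Z i).1 (Z i).2 := by
      rw [← hTmap, lintegral_map hgL hT]
      exact lintegral_finset_sum (f := fun i q => c (T q i))
        Finset.univ (fun i _ => hc.measurable.comp (hTi i))
    have hR : ∫⁻ ω, ∑ i, c ((ω i).1, (ω (σ i)).2) ∂(θ : Measure (Fin N → X1 × X2))
        = ∑ i, liftCost 𝕄 c (Z i).1 (Z (σ i)).2 := by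
      rw [← hTmap, lintegral_map hgR hT]
      exact lintegral_finset_sum (f := fun i q => c ((T q i).1, (T q (σ i)).2))
        Finset.univ (fun i _ => hc.measurable.comp
          ((measurable_fst.comp (hTi i)).prodMk (measurable_snd.comp (hTi (σ i)))))
    rw [hL, hR]
    exact key

end OTRM
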